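/- For the DE transformation on (0,1), φ(u) = (1/2)(1 + tanh((π/2) sinh u)), and for 0 < α < 1, the function u ↦ φ(u)^{-α} · φ'(u) is bounded on (-∞, 0] and decays to 0 as u → -∞. -/

import Mathlib

open Real Filter

theorem de_annuls_endpoint_singularity (α : ℝ) (hα0 : 0 < α) (hα1 : α < 1)
    (φ : ℝ → ℝ)
    (hφ : ∀ u, φ u = (1/2) * (1 + Real.tanh (π/2 * Real.sinh u)))
    (φ' : ℝ → ℝ)
    (hφ' : ∀ u, φ' u = (π/4) * (1 / Real.cosh (π/2 * Real.sinh u)) ^ 2 * Real.cosh u) :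
    (∃ M : ℝ, ∀ u ≤ (0:ℝ), |φ u ^ (-α) * φ' u| ≤ M) ∧
    Tendsto (fun u => φ u ^ (-α) * φ' u) atBot (nhds 0) := by
  have hπ := Real.pi_pos
  set c : ℝ := (1 - α) * π with hc
  have hcpos : 0 < c := mul_pos (by linarith) hπ
  -- φ as a quotient of exponentials
  have hid : ∀ u, φ u = Real.exp (π/2 * Real.sinh u) / (2 * Real.cosh (π/2 * Real.sinh u)) := by
    intro u
    have hc0 : Real.cosh (π/2 * Real.sinh u) ≠ 0 := ne_of_gt (Real.cosh_pos _)
    rw [hφ, Real.tanh_eq_sinh_div_cosh, ← Real.cosh_add_sinh]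
    field_simp
  have hφpos : ∀ u, 0 < φ u := by
    intro u; rw [hid u]
    positivity
  have hφ'nonneg : ∀ u, 0 ≤ φ' u := by
    intro u; rw [hφ' u]; positivity
  have hf0 : ∀ u, 0 ≤ φ u ^ (-α) * φ' u := fun u =>
    mul_nonneg (Real.rpow_nonneg (hφpos u).le _) (hφ'nonneg u)
  -- the key pointwise bound for u ≤ 0
  have key : ∀ u ≤ (0:ℝ), φ u ^ (-α) * φ' u ≤ 2 * π * Real.exp (c * Real.sinh u - u) := by
    intro u hu
    set x := π/2 * Real.sinh u with hx
    have hsinh : Real.sinh u ≤ 0 := Real.sinh_nonpos_iff.mpr hu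
    have hxle : x ≤ 0 := by
      rw [hx]; nlinarith
    have hcoshpos := Real.cosh_pos x
    have hexppos := Real.exp_pos x
    have hmul1 : Real.exp x * Real.exp (-x) = 1 := by
      rw [← Real.exp_add]; simp
    have hmul2 : Real.exp x * Real.exp x = Real.exp (2*x) := by
      rw [← Real.exp_add]; ring_nf
    -- bound for φ u ^ (-α)
    have hA : φ u ^ (-α) = (2 * Real.cosh x / Real.exp x) ^ α := by
      rw [hid u, ← hx, Real.rpow_neg (by positivity), ← Real.inv_rpow (by positivity), inv_div]
    have hbase : 2 * Real.cosh x / Real.exp x = 1 + Real.exp (-(2*x)) := by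
      rw [Real.cosh_eq, div_eq_iff (ne_of_gt hexppos)]
      have h3 : Real.exp (-(2*x)) * Real.exp x = Real.exp (-x) := by
        rw [← Real.exp_add]; ring_nf
      linarith [h3]
    have hb2 : 1 + Real.exp (-(2*x)) ≤ 2 * Real.exp (-(2*x)) := by
      have h1 : (1:ℝ) = Real.exp 0 := by simp
      have : Real.exp 0 ≤ Real.exp (-(2*x)) := Real.exp_le_exp.mpr (by linarith)
      rw [h1]; linarith
    have h2a : (2:ℝ) ^ α ≤ 2 := by
      calc (2:ℝ) ^ α ≤ (2:ℝ) ^ (1:ℝ) :=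
            Real.rpow_le_rpow_of_exponent_le one_le_two hα1.le
        _ = 2 := Real.rpow_one 2
    have hexpr : Real.exp (-(2*x)) ^ α = Real.exp (-(2*x) * α) := (Real.exp_mul _ _).symm
    have h1 : φ u ^ (-α) ≤ 2 * Real.exp (-(2*x) * α) := by
      rw [hA, hbase]
      calc (1 + Real.exp (-(2*x))) ^ α
          ≤ (2 * Real.exp (-(2*x))) ^ α :=
            Real.rpow_le_rpow (by positivity) hb2 hα0.le
        _ = (2:ℝ) ^ α * Real.exp (-(2*x)) ^ α :=
            Real.mul_rpow (by norm_num) (Real.exp_pos _).le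
        _ ≤ 2 * Real.exp (-(2*x) * α) := by
            rw [hexpr]
            exact mul_le_mul_of_nonneg_right h2a (Real.exp_pos _).le
    -- bound for φ' u
    have h1c : 1 / Real.cosh x ≤ 2 * Real.exp x := by
      rw [div_le_iff₀ hcoshpos, Real.cosh_eq]
      nlinarith [Real.exp_pos (-x)]
    have hcoshu : Real.cosh u ≤ Real.exp (-u) := by
      rw [Real.cosh_eq]
      have : Real.exp u ≤ Real.exp (-u) := Real.exp_le_exp.mpr (by linarith)
      linarith
    have hsq : (1 / Real.cosh x) ^ 2 ≤ 4 * Real.exp (2*x) := by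
      have := pow_le_pow_left₀ (by positivity) h1c 2
      calc (1 / Real.cosh x) ^ 2 ≤ (2 * Real.exp x) ^ 2 := this
        _ = 4 * Real.exp (2*x) := by rw [mul_pow, ← hmul2]; ring
    have h2 : φ' u ≤ π * Real.exp (2*x) * Real.exp (-u) := by
      rw [hφ' u, ← hx]
      have hcu : 0 < Real.cosh u := Real.cosh_pos u
      calc π/4 * (1 / Real.cosh x) ^ 2 * Real.cosh u
          ≤ π/4 * (4 * Real.exp (2*x)) * Real.cosh u := by
            apply mul_le_mul_of_nonneg_right _ hcu.le
            exact mul_le_mul_of_nonneg_left hsq (by positivity)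
        _ ≤ π/4 * (4 * Real.exp (2*x)) * Real.exp (-u) := by
            apply mul_le_mul_of_nonneg_left hcoshu (by positivity)
        _ = π * Real.exp (2*x) * Real.exp (-u) := by ring
    -- combine
    calc φ u ^ (-α) * φ' u
        ≤ (2 * Real.exp (-(2*x) * α)) * (π * Real.exp (2*x) * Real.exp (-u)) := by
          apply mul_le_mul h1 h2 (hφ'nonneg u) (by positivity)
      _ = 2 * π * (Real.exp (-(2*x) * α) * Real.exp (2*x) * Real.exp (-u)) := by ring
      _ = 2 * π * Real.exp (c * Real.sinh u - u) := by
          rw [← Real.exp_add, ← Real.exp_add]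
          congr 1
          rw [hx, hc]
          ring
  -- tendsto of the bounding function
  have hinner : Tendsto (fun u => c * Real.sinh u - u) atBot atBot := by
    have hstep : Tendsto (fun s : ℝ => s - c/2 * Real.exp s) atTop atBot := by
      have heq2 : ∀ s : ℝ, s - c/2 * Real.exp s = Real.exp s * (s * Real.exp (-s) - c/2) := by
        intro s
        have h := Real.exp_ne_zero s
        rw [Real.exp_neg]
        field_simp
      have hlim : Tendsto (fun s : ℝ => s * Real.exp (-s) - c/2) atTop (nhds (0 - c/2)) := by
        have := Real.tendsto_pow_mul_exp_neg_atTop_nhds_zero 1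
        simpa using this.sub_const (c/2)
      have := Tendsto.atTop_mul_neg (by linarith : (0:ℝ) - c/2 < 0) Real.tendsto_exp_atTop hlim
      exact Tendsto.congr (fun s => (heq2 s).symm) this
    have h02 : Tendsto (fun u : ℝ => -u - c/2 * Real.exp (-u)) atBot atBot := by
      have := hstep.comp tendsto_neg_atBot_atTop
      exact this
    have h01 : Tendsto (fun u : ℝ => c/2 * Real.exp u) atBot (nhds (c/2 * 0)) :=
      Real.tendsto_exp_atBot.const_mul (c/2)
    have h01' : Tendsto (fun u : ℝ => c/2 * Real.exp u) atBot (nhds 0) := by simpa using h01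
    have := h01'.add_atBot h02
    apply this.congr
    intro u
    rw [Real.sinh_eq]
    ring
  have hup : Tendsto (fun u => 2 * π * Real.exp (c * Real.sinh u - u)) atBot (nhds 0) := by
    have := (Real.tendsto_exp_atBot.comp hinner).const_mul (2*π)
    simpa using this
  have htendsto : Tendsto (fun u => φ u ^ (-α) * φ' u) atBot (nhds 0) := by
    apply tendsto_of_tendsto_of_tendsto_of_le_of_le' tendsto_const_nhds hup
    · exact Eventually.of_forall fun u => hf0 u
    · filter_upwards [eventually_le_atBot (0:ℝ)] with u hu
      exact key u hu
  refine ⟨?_, htendsto⟩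
  -- boundedness on (-∞, 0]
  have hcosh : Continuous fun u => Real.cosh (π/2 * Real.sinh u) := by fun_prop
  have hsinhc : Continuous fun u => Real.sinh (π/2 * Real.sinh u) := by fun_prop
  have hφc : Continuous φ := by
    have : φ = fun u => (1/2) * (1 + Real.sinh (π/2 * Real.sinh u) / Real.cosh (π/2 * Real.sinh u)) := by
      funext u
      rw [hφ u, Real.tanh_eq_sinh_div_cosh]
    rw [this]
    exact continuous_const.mul (continuous_const.add
      (hsinhc.div hcosh fun u => ne_of_gt (Real.cosh_pos _)))
  have hφ'c : Continuous φ' := by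
    have : φ' = fun u => (π/4) * (1 / Real.cosh (π/2 * Real.sinh u)) ^ 2 * Real.cosh u :=
      funext hφ'
    rw [this]
    exact (continuous_const.mul
      ((continuous_const.div hcosh fun u => ne_of_gt (Real.cosh_pos _)).pow 2)).mul
      Real.continuous_cosh
  have hcont : Continuous fun u => φ u ^ (-α) * φ' u :=
    (hφc.rpow_const fun u => Or.inl (ne_of_gt (hφpos u))).mul hφ'c
  have hev : ∀ᶠ u in atBot, |φ u ^ (-α) * φ' u| ≤ 1 := by
    have h := htendsto
    rw [Metric.tendsto_nhds] at h
    filter_upwards [h 1 one_pos] with u hu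
    rw [Real.dist_eq, sub_zero] at hu
    exact hu.le
  obtain ⟨a, ha⟩ := eventually_atBot.mp hev
  obtain ⟨C, hC⟩ := (isCompact_Icc (a := a) (b := (0:ℝ))).exists_bound_of_continuousOn
    hcont.continuousOn
  refine ⟨max 1 C, fun u hu => ?_⟩
  by_cases h : u ≤ a
  · exact le_trans (ha u h) (le_max_left _ _)
  · push_neg at h
    have := hC u ⟨h.le, hu⟩
    rw [Real.norm_eq_abs] at this
    exact le_trans this (le_max_right _ _)
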